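/- For every ℓ ≥ 4, the graph A_ℓ admits no semi-transitive orientation, and hence is not word-representable. -/

import Mathlib

def Alternate {V : Type*} [DecidableEq V] (x y : V) (w : List V) : Prop :=
  (w.filter fun z => decide (z = x ∨ z = y)).Chain' (· ≠ ·)

/-- `w` represents the graph `G`: every vertex occurs in `w`, and two distinct
vertices alternate in `w` iff they are adjacent in `G`. -/
def Represents {V : Type*} [DecidableEq V] (G : SimpleGraph V) (w : List V) : Prop :=
  (∀ v : V, v ∈ w) ∧ ∀ x y : V, x ≠ y → (G.Adj x y ↔ Alternate x y w)

def WordRepresentable {V : Type*} [DecidableEq V] (G : SimpleGraph V) : Prop :=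
  ∃ w : List V, Represents G w

/-- `R` is an orientation of `G`: `R` holds only on edges, and each edge gets
exactly one direction. -/
def IsOrientation {V : Type*} (G : SimpleGraph V) (R : V → V → Prop) : Prop :=
  (∀ x y, R x y → G.Adj x y) ∧ ∀ x y, G.Adj x y → (R x y ↔ ¬ R y x)

/-- `R` has no directed cycles. -/
def Acyclic {V : Type*} (R : V → V → Prop) : Prop :=
  ∀ v, ¬ Relation.TransGen R v v

/-- `R` is semi-transitive: acyclic, and every directed path `p 0 → ⋯ → p k`
whose endpoints are joined by the edge `p 0 → p k` is fully transitive. -/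
def SemiTransitive {V : Type*} (R : V → V → Prop) : Prop :=
  Acyclic R ∧
  ∀ (k : ℕ) (p : Fin (k + 1) → V),
    (∀ i : Fin k, R (p i.castSucc) (p i.succ)) →
    R (p 0) (p (Fin.last k)) →
    ∀ i j : Fin (k + 1), i < j → R (p i) (p j)

/-- The graph `A_ℓ` with `m = ℓ - 1` (zero-based): the graph `K^△_m`
(clique `inl i`, `i : Fin m`, plus vertices `inr (inl i)` adjacent exactly to
`inl i` and `inl ((i+1) mod m)`), together with an extra vertex `inr (inr ())`
(the vertex `ℓ` of the paper) adjacent exactly to all clique vertices. -/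
def AGraph (m : ℕ) : SimpleGraph (Fin m ⊕ (Fin m ⊕ Unit)) :=
  SimpleGraph.fromRel fun a b =>
    match a, b with
    | .inl i, .inl j => i ≠ j
    | .inl i, .inr (.inl j) => i.1 = j.1 ∨ i.1 = (j.1 + 1) % m
    | .inl _, .inr (.inr _) => True
    | _, _ => False


section Rank
variable {V : Type*} {R : V → V → Prop} {B : Finset V}

open Classical in
noncomputable def rnk (R : V → V → Prop) (B : Finset V) (u : V) : ℕ :=
  (B.filter fun v => R v u).card

variable (hasym : ∀ u v, R u v → ¬ R v u)
variable (htot : ∀ u ∈ B, ∀ v ∈ B, u ≠ v → R u v ∨ R v u)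
variable (htrans : ∀ u v z, u ∈ B → v ∈ B → z ∈ B → R u v → R v z → R u z)

include hasym htrans in
lemma rnk_lt {u v : V} (hu : u ∈ B) (hv : v ∈ B) (h : R u v) : rnk R B u < rnk R B v := by
  classical
  apply Finset.card_lt_card
  rw [Finset.ssubset_def]
  constructor
  · intro z hz
    rw [Finset.mem_filter] at hz ⊢
    exact ⟨hz.1, htrans z u v hz.1 hu hv hz.2 h⟩
  · intro hc
    have h1 : u ∈ B.filter fun z => R z v := Finset.mem_filter.2 ⟨hu, h⟩
    have h2 := hc h1
    rw [Finset.mem_filter] at h2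
    exact hasym u u h2.2 h2.2

include hasym htot htrans in
lemma rnk_lt_iff {u v : V} (hu : u ∈ B) (hv : v ∈ B) :
    R u v ↔ rnk R B u < rnk R B v := by
  constructor
  · exact rnk_lt hasym htrans hu hv
  · intro h
    have hne : u ≠ v := by rintro rfl; omega
    rcases htot u hu v hv hne with h' | h'
    · exact h'
    · have := rnk_lt hasym htrans hv hu h'
      omega

include hasym htot htrans in
lemma rnk_inj {u v : V} (hu : u ∈ B) (hv : v ∈ B) (h : rnk R B u = rnk R B v) : u = v := by
  by_contra hne
  rcases htot u hu v hv hne with h' | h' <;>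
    have := rnk_lt hasym htrans (by assumption) (by assumption) h' <;> omega

include hasym in
lemma rnk_le {u : V} (hu : u ∈ B) : rnk R B u ≤ B.card - 1 := by
  classical
  have hsub : (B.filter fun v => R v u) ⊆ B.erase u := by
    intro z hz
    rw [Finset.mem_filter] at hz
    rw [Finset.mem_erase]
    exact ⟨fun hc => hasym u u (hc ▸ hz.2) (hc ▸ hz.2), hz.1⟩
  calc rnk R B u ≤ (B.erase u).card := Finset.card_le_card hsub
    _ = B.card - 1 := Finset.card_erase_of_mem hu

include hasym htot htrans in
lemma rnk_surj {s : ℕ} (hs : s < B.card) : ∃ u ∈ B, rnk R B u = s := by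
  classical
  have hss : B.image (rnk R B) ⊆ Finset.range B.card := by
    intro z hz
    rw [Finset.mem_image] at hz
    obtain ⟨u, hu, rfl⟩ := hz
    rw [Finset.mem_range]
    have h1 := rnk_le (R := R) hasym hu
    have h2 : 0 < B.card := Finset.card_pos.2 ⟨u, hu⟩
    omega
  have hcard : (Finset.range B.card).card ≤ (B.image (rnk R B)).card := by
    rw [Finset.card_range, Finset.card_image_of_injOn
      fun u hu v hv h => rnk_inj hasym htot htrans hu hv h]
  have := Finset.eq_of_subset_of_card_le hss hcard
  have hmem : s ∈ B.image (rnk R B) := by rw [this, Finset.mem_range]; exact hs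
  rw [Finset.mem_image] at hmem
  obtain ⟨u, hu, hru⟩ := hmem
  exact ⟨u, hu, hru⟩

include hasym htot htrans in
lemma rnk_between {u v : V} (hu : u ∈ B) (hv : v ∈ B) (h : R u v)
    (hne : rnk R B v ≠ rnk R B u + 1) : ∃ z ∈ B, R u z ∧ R z v := by
  have h1 : rnk R B u < rnk R B v := rnk_lt hasym htrans hu hv h
  have h2 : rnk R B v ≤ B.card - 1 := rnk_le hasym hv
  have h3 : 0 < B.card := Finset.card_pos.2 ⟨u, hu⟩
  obtain ⟨z, hz, hrz⟩ := rnk_surj hasym htot htrans (s := rnk R B u + 1) (by omega)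
  refine ⟨z, hz, ?_, ?_⟩
  · exact (rnk_lt_iff hasym htot htrans hu hz).2 (by omega)
  · exact (rnk_lt_iff hasym htot htrans hz hv).2 (by omega)

include hasym in
lemma rnk_eq_zero {x : V} (hx : x ∈ B) (h : ∀ u ∈ B, u ≠ x → R x u) : rnk R B x = 0 := by
  classical
  rw [rnk, Finset.card_eq_zero, Finset.filter_eq_empty_iff]
  intro z hz hc
  by_cases hzx : z = x
  · exact hasym x x (hzx ▸ hc) (hzx ▸ hc)
  · exact hasym x z (h z hz hzx) hc

include hasym in
lemma rnk_eq_max {y : V} (hy : y ∈ B) (h : ∀ u ∈ B, u ≠ y → R u y) :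
    rnk R B y = B.card - 1 := by
  classical
  rw [rnk]
  have : (B.filter fun v => R v y) = B.erase y := by
    ext z
    rw [Finset.mem_filter, Finset.mem_erase]
    constructor
    · intro ⟨hz, hr⟩
      exact ⟨fun hc => hasym y y (hc ▸ hr) (hc ▸ hr), hz⟩
    · intro ⟨hne, hz⟩
      exact ⟨hz, h z hz hne⟩
  rw [this, Finset.card_erase_of_mem hy]

end Rank


section Word
variable {V : Type*} [DecidableEq V]

def AltF (x y : V) : List V → Prop
  | [] => True
  | a :: w => if a = x then AltF y x w else if a = y then False else AltF x y w

def Bal (x y : V) (w : List V) : Prop :=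
  ∀ n, (w.take n).count y ≤ (w.take n).count x ∧ (w.take n).count x ≤ (w.take n).count y + 1

lemma bal_cons {x y : V} (hxy : x ≠ y) (a : V) (w : List V) :
    Bal x y (a :: w) ↔
      (if a = x then Bal y x w else if a = y then False else Bal x y w) := by
  split_ifs with h1 h2
  · subst h1
    constructor
    · intro h n
      have := h (n + 1)
      rw [List.take_succ_cons, List.count_cons_self, List.count_cons_of_ne hxy] at this
      omega
    · intro h n
      cases n with
      | zero => simp
      | succ n =>
        have := h n
        rw [List.take_succ_cons, List.count_cons_self, List.count_cons_of_ne hxy]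
        omega
  · subst h2
    simp only [iff_false]
    intro h
    have := h 1
    rw [List.take_succ_cons, List.take_zero, List.count_cons_self,
      List.count_cons_of_ne hxy.symm] at this
    simp at this
  · constructor
    · intro h n
      have := h (n + 1)
      rwa [List.take_succ_cons, List.count_cons_of_ne h1,
        List.count_cons_of_ne h2] at this
    · intro h n
      cases n with
      | zero => simp
      | succ n =>
        have := h n
        rwa [List.take_succ_cons, List.count_cons_of_ne h1,
          List.count_cons_of_ne h2]

lemma altF_iff_bal {x y : V} (hxy : x ≠ y) (w : List V) : AltF x y w ↔ Bal x y w := by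
  induction w generalizing x y with
  | nil =>
    simp only [AltF, true_iff]
    intro n; simp
  | cons a w ih =>
    rw [bal_cons hxy]
    simp only [AltF]
    split_ifs with h1 h2
    · exact ih hxy.symm
    · rfl
    · exact ih hxy

lemma altF_of_not_mem {x y : V} {w : List V} (h : ∀ z ∈ w, z ≠ x ∧ z ≠ y) : AltF x y w := by
  induction w generalizing x y with
  | nil => trivial
  | cons a w ih =>
    obtain ⟨h1, h2⟩ := h a List.mem_cons_self
    simpa only [AltF, if_neg h1, if_neg h2] using
      ih (fun z hz => h z (List.mem_cons_of_mem a hz))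

lemma altF_head {x y : V} {w : List V} (h : AltF x y w) :
    (w.filter fun z => decide (z = x ∨ z = y)).head? = some x ∨
      (w.filter fun z => decide (z = x ∨ z = y)) = [] := by
  induction w generalizing x y with
  | nil => right; rfl
  | cons a w ih =>
    by_cases h1 : a = x
    · subst h1; left; simp [List.filter_cons]
    · by_cases h2 : a = y
      · subst h2
        simp only [AltF, if_neg h1, if_pos rfl, if_true] at h
      · simp only [AltF, if_neg h1, if_neg h2] at h
        simpa [List.filter_cons, h1, h2] using ih h

lemma filter_comm (x y : V) (w : List V) :
    (w.filter fun z => decide (z = x ∨ z = y)) = (w.filter fun z => decide (z = y ∨ z = x)) :=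
  List.filter_congr fun z _ => decide_eq_decide.2 or_comm

lemma filter_nil_not_mem {x y : V} {w : List V}
    (h : (w.filter fun z => decide (z = x ∨ z = y)) = []) :
    ∀ z ∈ w, z ≠ x ∧ z ≠ y := by
  intro z hz
  constructor <;> intro hc <;> subst hc
  · have : z ∈ (w.filter fun z' => decide (z' = z ∨ z' = y)) :=
      List.mem_filter.2 ⟨hz, by simp⟩
    rw [h] at this; simp at this
  · have : z ∈ (w.filter fun z' => decide (z' = x ∨ z' = z)) :=
      List.mem_filter.2 ⟨hz, by simp⟩
    rw [h] at this; simp at this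

lemma altF_alternate {x y : V} (hxy : x ≠ y) {w : List V} (h : AltF x y w) :
    Alternate x y w := by
  induction w generalizing x y with
  | nil => simp [Alternate, List.Chain']
  | cons a w ih =>
    by_cases h1 : a = x
    · subst h1
      simp only [AltF, if_pos rfl] at h
      unfold Alternate
      rw [List.filter_cons, if_pos (by simp), List.Chain', List.isChain_cons]
      refine ⟨?_, ?_⟩
      · intro z hz
        rcases altF_head h with h' | h'
        · rw [filter_comm y a] at h'
          rw [h'] at hz
          simp only [Option.mem_def, Option.some.injEq] at hz
          subst hz; exact hxy
        · rw [filter_comm y a] at h'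
          rw [h'] at hz; simp at hz
      · have := ih hxy.symm h
        unfold Alternate at this
        rwa [filter_comm y a] at this
    · by_cases h2 : a = y
      · subst h2
        simp only [AltF, if_neg h1, if_pos rfl, if_true] at h
      · simp only [AltF, if_neg h1, if_neg h2] at h
        unfold Alternate
        rw [List.filter_cons, if_neg (by simp [h1, h2])]
        exact ih hxy h

lemma alternate_altF {x y : V} (hxy : x ≠ y) {w : List V} (h : Alternate x y w) :
    AltF x y w ∨ AltF y x w := by
  induction w generalizing x y with
  | nil => left; trivial
  | cons a w ih =>
    unfold Alternate at h
    by_cases h1 : a = x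
    · subst h1
      rw [List.filter_cons, if_pos (by simp), List.Chain', List.isChain_cons] at h
      obtain ⟨hhead, hch⟩ := h
      left
      simp only [AltF, if_pos rfl]
      rcases ih hxy hch with h' | h'
      · rcases altF_head h' with h'' | h''
        · exact absurd rfl (hhead a (by rw [h'']; rfl))
        · exact altF_of_not_mem fun z hz =>
            ⟨(filter_nil_not_mem h'' z hz).2, (filter_nil_not_mem h'' z hz).1⟩
      · exact h'
    · by_cases h2 : a = y
      · subst h2
        rw [List.filter_cons, if_pos (by simp), List.Chain', List.isChain_cons] at h
        obtain ⟨hhead, hch⟩ := h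
        right
        simp only [AltF, if_neg (Ne.symm hxy), if_pos rfl]
        rcases ih hxy hch with h' | h'
        · exact h'
        · rcases altF_head h' with h'' | h''
          · rw [filter_comm a x] at h''
            exact absurd rfl (hhead a (by rw [h'']; rfl))
          · rw [filter_comm a x] at h''
            exact altF_of_not_mem fun z hz =>
              ⟨(filter_nil_not_mem h'' z hz).1, (filter_nil_not_mem h'' z hz).2⟩
      · rw [List.filter_cons, if_neg (by simp [h1, h2])] at h
        rcases ih hxy h with h' | h'
        · left; simpa only [AltF, if_neg h1, if_neg h2] using h'
        · right; simpa only [AltF, if_neg h2, if_neg h1] using h'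

lemma altF_indexOf_lt {x y : V} (hxy : x ≠ y) {w : List V} (h : AltF x y w) (hy : y ∈ w) :
    w.idxOf x < w.idxOf y := by
  induction w generalizing x y with
  | nil => simp at hy
  | cons a w ih =>
    by_cases h1 : a = x
    · subst h1
      rw [List.idxOf_cons_self, List.idxOf_cons_ne _ hxy]
      omega
    · by_cases h2 : a = y
      · subst h2
        simp only [AltF, if_neg h1, if_pos rfl, if_true] at h
      · simp only [AltF, if_neg h1, if_neg h2] at h
        have hy' : y ∈ w := by
          rcases List.mem_cons.1 hy with h' | h'
          · exact absurd h'.symm h2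
          · exact h'
        rw [List.idxOf_cons_ne _ h1, List.idxOf_cons_ne _ h2]
        exact Nat.succ_lt_succ (ih hxy h hy')

lemma alternate_bal {x y : V} (hxy : x ≠ y) {w : List V} (h : Alternate x y w)
    (hx : x ∈ w) (hidx : w.idxOf x < w.idxOf y) : Bal x y w := by
  rcases alternate_altF hxy h with h' | h'
  · exact (altF_iff_bal hxy w).1 h'
  · exact absurd (altF_indexOf_lt hxy.symm h' hx) (by omega)

theorem repr_semitrans {V : Type*} [DecidableEq V] {G : SimpleGraph V}
    (h : WordRepresentable G) : ∃ R, IsOrientation G R ∧ SemiTransitive R := by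
  obtain ⟨w, hmem, hadj⟩ := h
  refine ⟨fun x y => G.Adj x y ∧ w.idxOf x < w.idxOf y, ⟨fun x y h => h.1, ?_⟩, ?_, ?_⟩
  · intro x y hxy
    have hne : w.idxOf x ≠ w.idxOf y :=
      fun h => hxy.ne ((List.idxOf_inj (hmem x)).1 h)
    constructor
    · intro ⟨_, hlt⟩ ⟨_, hlt'⟩; omega
    · intro hn
      refine ⟨hxy, ?_⟩
      by_contra hc
      exact hn ⟨hxy.symm, by omega⟩
  · intro v hv
    have htr : Transitive fun x y : V => w.idxOf x < w.idxOf y :=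
      fun a b c h1 h2 => lt_trans h1 h2
    have h2 : Relation.TransGen (fun x y : V => w.idxOf x < w.idxOf y) v v :=
      Relation.TransGen.mono (fun x y h => h.2) _ _ hv
    rw [@Relation.transGen_eq_self _ (fun x y : V => w.idxOf x < w.idxOf y) ⟨fun _ _ _ h1 h2 => htr h1 h2⟩] at h2
    exact lt_irrefl _ h2
  · intro k p hcons hlast i j hij
    have sm : StrictMono fun i => w.idxOf (p i) :=
      Fin.strictMono_iff_lt_succ.2 fun i => (hcons i).2
    have hlt : w.idxOf (p i) < w.idxOf (p j) := sm hij
    have hneij : p i ≠ p j := fun h => by rw [h] at hlt; omega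
    have hbal : ∀ i : Fin k, Bal (p i.castSucc) (p i.succ) w := by
      intro i
      have hadj' := (hcons i).1
      exact alternate_bal hadj'.ne ((hadj _ _ hadj'.ne).1 hadj') (hmem _) (hcons i).2
    have hbal0 : Bal (p 0) (p (Fin.last k)) w :=
      alternate_bal hlast.1.ne ((hadj _ _ hlast.1.ne).1 hlast.1) (hmem _) hlast.2
    have hBij : Bal (p i) (p j) w := by
      intro n
      have hanti : ∀ i' j' : Fin (k+1), i' ≤ j' →
          (w.take n).count (p j') ≤ (w.take n).count (p i') := by
        intro i' j' hle
        have hmono : Monotone fun i : Fin (k+1) =>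
            OrderDual.toDual ((w.take n).count (p i)) :=
          Fin.monotone_iff_le_succ.2 fun i =>
            OrderDual.toDual_le_toDual.2 (hbal i n).1
        exact OrderDual.toDual_le_toDual.1 (hmono hle)
      have h1 := hanti i j hij.le
      have h2 := hanti 0 i (Fin.zero_le i)
      have h3 := hanti j (Fin.last k) (Fin.le_last j)
      have h4 := (hbal0 n).2
      exact ⟨h1, by omega⟩
    have halt : Alternate (p i) (p j) w :=
      altF_alternate hneij ((altF_iff_bal hneij w).2 hBij)
    exact ⟨(hadj _ _ hneij).2 halt, hlt⟩

end Word

theorem no_semitransitive_orientation (m : ℕ) (hm : 3 ≤ m) :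
    ¬ ∃ R, IsOrientation (AGraph m) R ∧ SemiTransitive R := by
  rintro ⟨R, ⟨hR1, hR2⟩, hAc, hST⟩
  -- basic consequences of acyclicity / orientation
  have hasym : ∀ u v, R u v → ¬ R v u := by
    intro u v h hc
    exact hAc u (Relation.TransGen.head h (Relation.TransGen.single hc))
  have hirr : ∀ u, ¬ R u u := fun u h => hAc u (Relation.TransGen.single h)
  have htotA : ∀ u v, (AGraph m).Adj u v → R u v ∨ R v u := by
    intro u v h
    by_cases hc : R u v
    · exact Or.inl hc
    · right
      by_contra hc2
      exact hc ((hR2 u v h).2 hc2)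
  have hcyc3 : ∀ u v z, R u v → R v z → R z u → False := fun u v z h1 h2 h3 =>
    hAc u (Relation.TransGen.head h1 (Relation.TransGen.head h2 (Relation.TransGen.single h3)))
  have hcyc4 : ∀ u v z t, R u v → R v z → R z t → R t u → False := fun u v z t h1 h2 h3 h4 =>
    hAc u (Relation.TransGen.head h1 (Relation.TransGen.head h2
      (Relation.TransGen.head h3 (Relation.TransGen.single h4))))
  have st3 : ∀ a b c d, R a b → R b c → R c d → R a d → R a c ∧ R b d := by
    intro a b c d h1 h2 h3 h4
    have hpath : ∀ i : Fin 3, R (![a,b,c,d] i.castSucc) (![a,b,c,d] i.succ) := by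
      intro i; fin_cases i <;> simpa
    have hlast : R (![a,b,c,d] 0) (![a,b,c,d] (Fin.last 3)) := by simpa
    exact ⟨hST 3 ![a,b,c,d] hpath hlast 0 2 (by decide),
      hST 3 ![a,b,c,d] hpath hlast 1 3 (by decide)⟩
  -- the big clique B (clique vertices plus the dominating vertex t)
  obtain ⟨tV, htV⟩ : ∃ t : Fin m ⊕ (Fin m ⊕ Unit), t = Sum.inr (Sum.inr ()) := ⟨_, rfl⟩
  obtain ⟨B, hB⟩ : ∃ B : Finset (Fin m ⊕ (Fin m ⊕ Unit)),
      B = (Finset.univ.image Sum.inl) ∪ {tV} := ⟨_, rfl⟩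
  have hmemB : ∀ v, v ∈ B ↔ (∃ i : Fin m, v = Sum.inl i) ∨ v = tV := by
    intro v
    rw [hB, Finset.mem_union, Finset.mem_image, Finset.mem_singleton]
    constructor
    · rintro (⟨i, _, rfl⟩ | h)
      · exact Or.inl ⟨i, rfl⟩
      · exact Or.inr h
    · rintro (⟨i, rfl⟩ | h)
      · exact Or.inl ⟨i, Finset.mem_univ i, rfl⟩
      · exact Or.inr h
  have hmemBc : ∀ i : Fin m, Sum.inl i ∈ B := fun i => (hmemB _).2 (Or.inl ⟨i, rfl⟩)
  have hmemBt : tV ∈ B := (hmemB _).2 (Or.inr rfl)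
  have hcardB : B.card = m + 1 := by
    rw [hB, Finset.card_union_of_disjoint (by simp [htV]),
      Finset.card_image_of_injective _ Sum.inl_injective]
    simp
  have hadjB : ∀ u ∈ B, ∀ v ∈ B, u ≠ v → (AGraph m).Adj u v := by
    intro u hu v hv huv
    rcases (hmemB u).1 hu with ⟨i, rfl⟩ | rfl <;> rcases (hmemB v).1 hv with ⟨j, rfl⟩ | rfl
    · have hij : i ≠ j := fun hc => huv (by rw [hc])
      simp [AGraph, SimpleGraph.fromRel_adj, hij]
    · rw [htV]; simp [AGraph, SimpleGraph.fromRel_adj]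
    · rw [htV]; exact (by simp [AGraph, SimpleGraph.fromRel_adj] :
        (AGraph m).Adj (Sum.inl j) (Sum.inr (Sum.inr ()))).symm
    · exact absurd rfl huv
  have htransB : ∀ u v z, u ∈ B → v ∈ B → z ∈ B → R u v → R v z → R u z := by
    intro u v z hu hv hz h1 h2
    have hne : u ≠ z := by rintro rfl; exact hasym u v h1 h2
    rcases htotA u z (hadjB u hu z hz hne) with h | h
    · exact h
    · exact (hcyc3 u v z h1 h2 h).elim
  have htotB : ∀ u ∈ B, ∀ v ∈ B, u ≠ v → R u v ∨ R v u :=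
    fun u hu v hv h => htotA u v (hadjB u hu v hv h)
  -- the key dichotomy for a vertex A adjacent exactly to {x, y} within B
  have sub : ∀ x y A, x ∈ B → y ∈ B →
      (AGraph m).Adj x A → (AGraph m).Adj y A →
      (∀ u ∈ B, u ≠ x → u ≠ y → ¬ (AGraph m).Adj u A) →
      R x y →
      rnk R B y = rnk R B x + 1 ∨ (rnk R B x = 0 ∧ rnk R B y = m) := by
    intro x y A hx hy hxA hyA hnadj hR
    rcases htotA x A hxA with hxA' | hAx
    · rcases htotA y A hyA with hyA' | hAy
      · -- sink: R x A, R y A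
        left
        by_contra hne
        obtain ⟨z, hz, hxz, hzy⟩ := rnk_between hasym htotB htransB hx hy hR hne
        have hzx : z ≠ x := by rintro rfl; exact hirr z hxz
        have hzy' : z ≠ y := by rintro rfl; exact hirr z hzy
        have := (st3 x z y A hxz hzy hyA' hxA').2
        exact hnadj z hz hzx hzy' (hR1 _ _ this)
      · -- middle: R x A, R A y
        right
        have hmin : ∀ u ∈ B, u ≠ x → R x u := by
          intro u hu hux
          by_cases huy : u = y
          · exact huy ▸ hR
          · rcases htotB u hu x hx hux with h | h
            · have huy2 : R u y := by
                rcases htotB u hu y hy huy with h' | h'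
                · exact h'
                · exact (hcyc4 y u x A h' h hxA' hAy).elim
              have := (st3 u x A y h hxA' hAy huy2).1
              exact ((hnadj u hu hux huy) (hR1 _ _ this)).elim
            · exact h
        have hmax : ∀ u ∈ B, u ≠ y → R u y := by
          intro u hu huy
          by_cases hux : u = x
          · exact hux ▸ hR
          · rcases htotB u hu y hy huy with h | h
            · exact h
            · have hxu : R x u := by
                rcases htotB x hx u hu (fun hc => hux hc.symm) with h' | h'
                · exact h'
                · exact (hcyc4 u x A y h' hxA' hAy h).elim
              have := (st3 x A y u hxA' hAy h hxu).2
              exact ((hnadj u hu hux huy) (hR1 _ _ this).symm).elim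
        refine ⟨rnk_eq_zero hasym hx hmin, ?_⟩
        rw [rnk_eq_max hasym hy hmax, hcardB]
        omega
    · rcases htotA y A hyA with hyA' | hAy
      · exact (hcyc3 A x y hAx hR hyA').elim
      · -- source: R A x, R A y
        left
        by_contra hne
        obtain ⟨z, hz, hxz, hzy⟩ := rnk_between hasym htotB htransB hx hy hR hne
        have hzx : z ≠ x := by rintro rfl; exact hirr z hxz
        have hzy' : z ≠ y := by rintro rfl; exact hirr z hzy
        have := (st3 A x z y hAx hxz hzy hAy).1
        exact hnadj z hz hzx hzy' (hR1 _ _ this).symm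
  -- cyclic successor
  have hm0 : 0 < m := by omega
  obtain ⟨nxt, hnxtdef⟩ : ∃ nxt : Fin m → Fin m,
      ∀ j, nxt j = ⟨(j.1 + 1) % m, Nat.mod_lt _ hm0⟩ := ⟨_, fun _ => rfl⟩
  have hnxtval : ∀ j, (nxt j).1 = (j.1 + 1) % m := fun j => by rw [hnxtdef]
  have hnxt_ne : ∀ j, nxt j ≠ j := by
    intro j hc
    have h1 : (j.1 + 1) % m = j.1 := by rw [← hnxtval, hc]
    have h2 := j.2
    rcases Nat.lt_or_ge (j.1 + 1) m with h | h
    · rw [Nat.mod_eq_of_lt h] at h1; omega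
    · have h3 : j.1 + 1 = m := by omega
      rw [h3, Nat.mod_self] at h1; omega
  have hnxt_nxt : ∀ j, nxt (nxt j) ≠ j := by
    intro j hc
    have h1 : ((j.1 + 1) % m + 1) % m = j.1 := by
      rw [← hnxtval, ← hnxtval, hc]
    have h2 := j.2
    rcases Nat.lt_or_ge (j.1 + 1) m with h | h
    · rw [Nat.mod_eq_of_lt h] at h1
      rcases Nat.lt_or_ge (j.1 + 1 + 1) m with h' | h'
      · rw [Nat.mod_eq_of_lt h'] at h1; omega
      · have h3 : j.1 + 1 + 1 = m := by omega
        rw [h3, Nat.mod_self] at h1; omega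
    · have h3 : j.1 + 1 = m := by omega
      rw [h3, Nat.mod_self, Nat.mod_eq_of_lt (by omega : 0 + 1 < m)] at h1
      omega
  -- adjacency facts around the apex vertices
  have hadjXY : ∀ j : Fin m, (AGraph m).Adj (Sum.inl j) (Sum.inl (nxt j)) := by
    intro j
    have := (hnxt_ne j).symm
    simp [AGraph, SimpleGraph.fromRel_adj, this]
  have hadjA1 : ∀ j : Fin m, (AGraph m).Adj (Sum.inl j) (Sum.inr (Sum.inl j)) := by
    intro j; simp [AGraph, SimpleGraph.fromRel_adj]
  have hadjA2 : ∀ j : Fin m, (AGraph m).Adj (Sum.inl (nxt j)) (Sum.inr (Sum.inl j)) := by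
    intro j
    have h := hnxtval j
    simp [AGraph, SimpleGraph.fromRel_adj, h]
  have hnadjA : ∀ j : Fin m, ∀ u ∈ B, u ≠ Sum.inl j → u ≠ Sum.inl (nxt j) →
      ¬ (AGraph m).Adj u (Sum.inr (Sum.inl j)) := by
    intro j u hu h1 h2 hadj
    rcases (hmemB u).1 hu with ⟨i, rfl⟩ | rfl
    · have hij : i ≠ j := fun hc => h1 (by rw [hc])
      have hij' : i ≠ nxt j := fun hc => h2 (by rw [hc])
      have hcond : ¬ (i.1 = j.1 ∨ i.1 = (j.1 + 1) % m) := by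
        rintro (hc | hc)
        · exact hij (Fin.ext hc)
        · exact hij' (Fin.ext (by rw [hc, hnxtval]))
      simp [AGraph, SimpleGraph.fromRel_adj, hcond] at hadj
    · rw [htV] at hadj
      simp [AGraph, SimpleGraph.fromRel_adj] at hadj
  -- per-apex dichotomy
  have key : ∀ j : Fin m,
      (rnk R B (Sum.inl j) + 1 = rnk R B (Sum.inl (nxt j)) ∨
        rnk R B (Sum.inl (nxt j)) + 1 = rnk R B (Sum.inl j)) ∨
      ((rnk R B (Sum.inl j) = 0 ∧ rnk R B (Sum.inl (nxt j)) = m) ∨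
        (rnk R B (Sum.inl (nxt j)) = 0 ∧ rnk R B (Sum.inl j) = m)) := by
    intro j
    rcases htotA _ _ (hadjXY j) with h | h
    · rcases sub (Sum.inl j) (Sum.inl (nxt j)) (Sum.inr (Sum.inl j)) (hmemBc j)
        (hmemBc (nxt j)) (hadjA1 j) (hadjA2 j)
        (fun u hu h1 h2 => hnadjA j u hu h1 h2) h with h' | h'
      · exact Or.inl (Or.inl h'.symm)
      · exact Or.inr (Or.inl h')
    · rcases sub (Sum.inl (nxt j)) (Sum.inl j) (Sum.inr (Sum.inl j)) (hmemBc (nxt j))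
        (hmemBc j) (hadjA2 j) (hadjA1 j)
        (fun u hu h1 h2 => hnadjA j u hu h2 h1) h with h' | h'
      · exact Or.inl (Or.inr h'.symm)
      · exact Or.inr (Or.inr h')
  -- rank values of the clique vertices and of t
  obtain ⟨r, hr⟩ : ∃ r : Fin m → ℕ, ∀ j, r j = rnk R B (Sum.inl j) := ⟨_, fun _ => rfl⟩
  obtain ⟨rt, hrtdef⟩ : ∃ n, n = rnk R B tV := ⟨_, rfl⟩
  have hrinj : ∀ j1 j2 : Fin m, r j1 = r j2 → j1 = j2 := by
    intro j1 j2 h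
    rw [hr, hr] at h
    exact Sum.inl_injective (rnk_inj hasym htotB htransB (hmemBc j1) (hmemBc j2) h)
  have hrne : ∀ j, r j ≠ rt := by
    intro j h
    rw [hr, hrtdef] at h
    have := rnk_inj hasym htotB htransB (hmemBc j) hmemBt h
    rw [htV] at this
    simp at this
  have hrle : ∀ j, r j ≤ m := by
    intro j
    have := rnk_le (R := R) hasym (hmemBc j)
    rw [hcardB] at this
    rw [hr]; omega
  have hrtle : rt ≤ m := by
    have := rnk_le (R := R) hasym hmemBt
    rw [hcardB] at this
    rw [hrtdef]; omega
  have key' : ∀ j : Fin m,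
      (min (r j) (r (nxt j)) + 1 = max (r j) (r (nxt j))) ∨
      (min (r j) (r (nxt j)) = 0 ∧ max (r j) (r (nxt j)) = m) := by
    intro j
    have := key j
    rw [← hr, ← hr] at this
    omega
  -- the injective pair map and the pigeonhole contradiction
  obtain ⟨g, hg⟩ : ∃ g : Fin m → ℕ × ℕ,
      ∀ j, g j = (min (r j) (r (nxt j)), max (r j) (r (nxt j))) := ⟨_, fun _ => rfl⟩
  have hginj : Function.Injective g := by
    intro j1 j2 h
    rw [hg, hg] at h
    have h1 := congrArg Prod.fst h
    have h2 := congrArg Prod.snd h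
    simp only at h1 h2
    have hset : (r j1 = r j2 ∧ r (nxt j1) = r (nxt j2)) ∨
        (r j1 = r (nxt j2) ∧ r (nxt j1) = r j2) := by omega
    rcases hset with ⟨ha, hb⟩ | ⟨ha, hb⟩
    · exact hrinj _ _ ha
    · have e1 : j1 = nxt j2 := hrinj _ _ ha
      have e2 : nxt j1 = j2 := hrinj _ _ hb
      exact ((hnxt_nxt j1) (by rw [e2, ← e1])).elim
  obtain ⟨T, hT⟩ : ∃ T : Finset (ℕ × ℕ),
      T = ((Finset.range m).filter fun s => s ≠ rt ∧ s + 1 ≠ rt).image (fun s => (s, s + 1)) ∪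
        (if rt = 0 ∨ rt = m then (∅ : Finset (ℕ × ℕ)) else {(0, m)}) := ⟨_, rfl⟩
  have hgmem : ∀ j, g j ∈ T := by
    intro j
    have hminc := min_choice (r j) (r (nxt j))
    have hmaxc := max_choice (r j) (r (nxt j))
    have hmin_ne : min (r j) (r (nxt j)) ≠ rt := by
      rcases hminc with h | h <;> rw [h] <;> exact hrne _
    have hmax_ne : max (r j) (r (nxt j)) ≠ rt := by
      rcases hmaxc with h | h <;> rw [h] <;> exact hrne _
    have hle1 := hrle j
    have hle2 := hrle (nxt j)
    rcases key' j with h | h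
    · rw [hT]
      apply Finset.mem_union_left
      rw [Finset.mem_image]
      refine ⟨min (r j) (r (nxt j)), ?_, ?_⟩
      · rw [Finset.mem_filter, Finset.mem_range]
        exact ⟨by omega, hmin_ne, by rw [h]; exact hmax_ne⟩
      · rw [hg, h]
    · rw [hT]
      apply Finset.mem_union_right
      rw [if_neg (by push_neg; exact ⟨fun hc => hmin_ne (by omega), fun hc => hmax_ne (by omega)⟩)]
      rw [Finset.mem_singleton, hg, h.1, h.2]
  have hm_le : m ≤ T.card := by
    have h1 : (Finset.univ.image g).card = m := by
      rw [Finset.card_image_of_injective _ hginj, Finset.card_univ, Fintype.card_fin]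
    have h2 : Finset.univ.image g ⊆ T := Finset.image_subset_iff.2 fun j _ => hgmem j
    calc m = (Finset.univ.image g).card := h1.symm
      _ ≤ T.card := Finset.card_le_card h2
  have hT_lt : T.card < m := by
    have hle := Finset.card_union_le
      (((Finset.range m).filter fun s => s ≠ rt ∧ s + 1 ≠ rt).image (fun s => (s, s + 1)))
      (if rt = 0 ∨ rt = m then (∅ : Finset (ℕ × ℕ)) else {(0, m)})
    have himg := Finset.card_image_le (f := fun s => (s, s + 1))
      (s := (Finset.range m).filter fun s => s ≠ rt ∧ s + 1 ≠ rt)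
    by_cases h0 : rt = 0 ∨ rt = m
    · have hsub : ((Finset.range m).filter fun s => s ≠ rt ∧ s + 1 ≠ rt) ⊆
          (Finset.range m).erase (if rt = 0 then 0 else m - 1) := by
        intro s hs
        rw [Finset.mem_filter, Finset.mem_range] at hs
        rw [Finset.mem_erase, Finset.mem_range]
        refine ⟨?_, hs.1⟩
        split_ifs with hc
        · rw [← hc]; exact hs.2.1
        · have hrm : rt = m := h0.resolve_left hc
          intro hceq
          exact hs.2.2 (by omega)
      have hflt : (((Finset.range m).filter fun s => s ≠ rt ∧ s + 1 ≠ rt)).card ≤ m - 1 := by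
        calc _ ≤ ((Finset.range m).erase (if rt = 0 then 0 else m - 1)).card :=
              Finset.card_le_card hsub
          _ = m - 1 := by
              rw [Finset.card_erase_of_mem (by rw [Finset.mem_range]; split_ifs <;> omega),
                Finset.card_range]
      rw [if_pos h0] at hle
      rw [hT, if_pos h0]
      have hemp : (∅ : Finset (ℕ × ℕ)).card = 0 := Finset.card_empty
      omega
    · push_neg at h0
      have hsub : ((Finset.range m).filter fun s => s ≠ rt ∧ s + 1 ≠ rt) ⊆
          ((Finset.range m).erase rt).erase (rt - 1) := by
        intro s hs
        rw [Finset.mem_filter, Finset.mem_range] at hs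
        rw [Finset.mem_erase, Finset.mem_erase, Finset.mem_range]
        refine ⟨?_, hs.2.1, hs.1⟩
        intro hc
        exact hs.2.2 (by omega)
      have hflt : (((Finset.range m).filter fun s => s ≠ rt ∧ s + 1 ≠ rt)).card ≤ m - 2 := by
        calc _ ≤ (((Finset.range m).erase rt).erase (rt - 1)).card := Finset.card_le_card hsub
          _ = m - 2 := by
              rw [Finset.card_erase_of_mem
                  (by rw [Finset.mem_erase, Finset.mem_range]; exact ⟨by omega, by omega⟩),
                Finset.card_erase_of_mem (by rw [Finset.mem_range]; omega),
                Finset.card_range]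
              omega
      rw [if_neg (by push_neg; exact h0)] at hle
      rw [hT, if_neg (by push_neg; exact h0)]
      have hsing : ({((0 : ℕ), m)} : Finset (ℕ × ℕ)).card = 1 := Finset.card_singleton _
      omega
  omega


/-- For every `ℓ ≥ 4`, the graph `A_ℓ` admits no semi-transitive orientation,
and hence is not word-representable. -/
theorem aGraph_not_wordRepresentable (ℓ : ℕ) (hℓ : 4 ≤ ℓ) :
    (¬ ∃ R, IsOrientation (AGraph (ℓ - 1)) R ∧ SemiTransitive R) ∧
    ¬ WordRepresentable (AGraph (ℓ - 1)) := by
  have hm : 3 ≤ ℓ - 1 := by omega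
  refine ⟨no_semitransitive_orientation (ℓ - 1) hm, fun h => ?_⟩
  exact no_semitransitive_orientation (ℓ - 1) hm (repr_semitrans h)
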